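/- Let K be a Markov kernel from ℝ^d to ℝ^{2d}, α : ℝ^d × ℝ^{2d} → [0,1] Borel measurable, and define the Markov kernel P on ℝ^d by P(q,A) = ∫ 1_A(proj(z)) α(q,z) K(q,dz) + δ_q(A) ∫ (1 − α(q,z)) K(q,dz), where proj : ℝ^{2d} → ℝ^d is the projection onto the first d coordinates. Let V : ℝ^d → [1,∞) be measurable and set, for q ∈ ℝ^d, R(q) = {z ∈ ℝ^{2d} : α(q,z) < 1} and B(q) = {z ∈ ℝ^{2d} : V(proj(z)) ≤ V(q)}. Suppose (1) there exist λ ∈ [0,1) and b ≥ 0 such that ∫ V(proj(z)) K(q,dz) ≤ λ V(q) + b for all q, and (2) lim_{M→∞} sup_{q : V(q) ≥ M} K(q, R(q) ∩ B(q)) = 0. Then there exist λ̃ ∈ [0,1) and b̃ ≥ 0 such that P V(q) ≤ λ̃ V(q) + b̃ for all q ∈ ℝ^d, where P V(q) = ∫ V(proj(z)) α(q,z) K(q,dz) + V(q) ∫ (1 − α(q,z)) K(q,dz). -/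

import Mathlib

open MeasureTheory Filter ProbabilityTheory
noncomputable section

/-- Foster–Lyapunov drift for a generalized Metropolis–Hastings kernel.
If the proposal kernel `K` satisfies a geometric drift condition for `V` and the mass of
the intersection of the potential-rejection region with the sublevel region of `V`
vanishes uniformly as `V(q) → ∞`, then the accept/reject kernel `P` satisfies a
geometric drift condition as well. -/
theorem metropolis_drift {d : ℕ}
    (K : Kernel (EuclideanSpace ℝ (Fin d))
      (EuclideanSpace ℝ (Fin d) × EuclideanSpace ℝ (Fin d)))
    [IsMarkovKernel K]
    (α : EuclideanSpace ℝ (Fin d) →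
      EuclideanSpace ℝ (Fin d) × EuclideanSpace ℝ (Fin d) → ℝ)
    (hα_meas : Measurable (Function.uncurry α))
    (hα : ∀ q z, α q z ∈ Set.Icc (0 : ℝ) 1)
    (V : EuclideanSpace ℝ (Fin d) → ℝ) (hV_meas : Measurable V)
    (hV_one : ∀ q, 1 ≤ V q)
    (lam : ℝ) (hlam : lam ∈ Set.Ico (0 : ℝ) 1) (b : ℝ) (hb : 0 ≤ b)
    (hdrift : ∀ q, ∫⁻ z, ENNReal.ofReal (V z.1) ∂(K q) ≤
      ENNReal.ofReal (lam * V q + b))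
    (hrej : Tendsto (fun M : ℝ =>
        ⨆ q ∈ {q : EuclideanSpace ℝ (Fin d) | M ≤ V q},
          (K q ({z | α q z < 1} ∩ {z | V z.1 ≤ V q})).toReal)
      atTop (nhds 0)) :
    ∃ lam' ∈ Set.Ico (0 : ℝ) 1, ∃ b' ≥ (0 : ℝ), ∀ q,
      (∫⁻ z, ENNReal.ofReal (V z.1 * α q z) ∂(K q)) +
          ENNReal.ofReal (V q) * (∫⁻ z, ENNReal.ofReal (1 - α q z) ∂(K q)) ≤
        ENNReal.ofReal (lam' * V q + b') := by
  classical
  obtain ⟨hlam0, hlam1⟩ := hlam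
  set ε : ℝ := (1 - lam) / 2 with hε_def
  have hε : 0 < ε := by simp only [hε_def]; linarith
  -- extract M from hrej
  have hev : ∀ᶠ M in atTop, (⨆ q ∈ {q : EuclideanSpace ℝ (Fin d) | M ≤ V q},
      (K q ({z | α q z < 1} ∩ {z | V z.1 ≤ V q})).toReal) < ε := by
    exact hrej.eventually (eventually_lt_nhds hε)
  obtain ⟨M0, hM0⟩ := eventually_atTop.mp hev
  set M : ℝ := max M0 0 with hM_def
  have hM0' : (⨆ q ∈ {q : EuclideanSpace ℝ (Fin d) | M ≤ V q},
      (K q ({z | α q z < 1} ∩ {z | V z.1 ≤ V q})).toReal) < ε := hM0 M (le_max_left _ _)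
  have hMnn : 0 ≤ M := le_max_right _ _
  refine ⟨lam + ε, ⟨by linarith, by simp only [hε_def]; linarith⟩, b + M, by linarith, ?_⟩
  intro q
  set S : Set (EuclideanSpace ℝ (Fin d) × EuclideanSpace ℝ (Fin d)) :=
    {z | α q z < 1} ∩ {z | V z.1 ≤ V q} with hS_def
  have hαq : Measurable (α q) := hα_meas.comp measurable_prodMk_left
  have hVfst : Measurable (fun z : EuclideanSpace ℝ (Fin d) × EuclideanSpace ℝ (Fin d) =>
      V z.1) := hV_meas.comp measurable_fst
  have hS : MeasurableSet S :=
    (measurableSet_lt hαq measurable_const).inter (measurableSet_le hVfst measurable_const)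
  have hVq0 : (0 : ℝ) ≤ V q := le_trans zero_le_one (hV_one q)
  -- rewrite second term as a single lintegral
  have h2 : ENNReal.ofReal (V q) * (∫⁻ z, ENNReal.ofReal (1 - α q z) ∂(K q))
      = ∫⁻ z, ENNReal.ofReal (V q * (1 - α q z)) ∂(K q) := by
    rw [← lintegral_const_mul _ (Measurable.ennreal_ofReal (f := fun z => 1 - α q z) (measurable_const.sub hαq))]
    refine lintegral_congr fun z => ?_
    rw [ENNReal.ofReal_mul hVq0]
  have hmeas1 : Measurable (fun z : EuclideanSpace ℝ (Fin d) × EuclideanSpace ℝ (Fin d) =>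
      ENNReal.ofReal (V z.1 * α q z)) := (hVfst.mul hαq).ennreal_ofReal
  have h3 : (∫⁻ z, ENNReal.ofReal (V z.1 * α q z) ∂(K q)) +
      (∫⁻ z, ENNReal.ofReal (V q * (1 - α q z)) ∂(K q))
      = ∫⁻ z, (ENNReal.ofReal (V z.1 * α q z) + ENNReal.ofReal (V q * (1 - α q z))) ∂(K q) :=
    (lintegral_add_left hmeas1 _).symm
  -- pointwise bound
  have hpt : ∀ z, ENNReal.ofReal (V z.1 * α q z) + ENNReal.ofReal (V q * (1 - α q z))
      ≤ ENNReal.ofReal (V z.1) + Set.indicator S (fun _ => ENNReal.ofReal (V q)) z := by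
    intro z
    obtain ⟨hα0, hα1⟩ := hα q z
    have hVz : (1 : ℝ) ≤ V z.1 := hV_one z.1
    rw [← ENNReal.ofReal_add (by nlinarith) (by nlinarith)]
    by_cases hz : z ∈ S
    · rw [Set.indicator_of_mem hz, ← ENNReal.ofReal_add (by nlinarith) hVq0]
      exact ENNReal.ofReal_le_ofReal (by nlinarith)
    · rw [Set.indicator_of_notMem hz, add_zero]
      refine ENNReal.ofReal_le_ofReal ?_
      rw [hS_def] at hz
      simp only [Set.mem_inter_iff, Set.mem_setOf_eq, not_and_or, not_lt, not_le] at hz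
      rcases hz with h | h
      · have : α q z = 1 := le_antisymm hα1 h
        rw [this]; ring_nf; linarith
      · nlinarith
  -- integrate pointwise bound and split
  have h4 : (∫⁻ z, (ENNReal.ofReal (V z.1 * α q z) + ENNReal.ofReal (V q * (1 - α q z))) ∂(K q))
      ≤ ENNReal.ofReal (lam * V q + b) + ENNReal.ofReal (V q) * K q S := by
    calc (∫⁻ z, (ENNReal.ofReal (V z.1 * α q z) + ENNReal.ofReal (V q * (1 - α q z))) ∂(K q))
        ≤ ∫⁻ z, (ENNReal.ofReal (V z.1)
            + Set.indicator S (fun _ => ENNReal.ofReal (V q)) z) ∂(K q) :=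
          lintegral_mono hpt
      _ = (∫⁻ z, ENNReal.ofReal (V z.1) ∂(K q))
            + ∫⁻ z, Set.indicator S (fun _ => ENNReal.ofReal (V q)) z ∂(K q) :=
          lintegral_add_left hVfst.ennreal_ofReal _
      _ = (∫⁻ z, ENNReal.ofReal (V z.1) ∂(K q)) + ENNReal.ofReal (V q) * K q S := by
          rw [lintegral_indicator_const hS]
      _ ≤ ENNReal.ofReal (lam * V q + b) + ENNReal.ofReal (V q) * K q S := by
          exact add_le_add_left (hdrift q) _
  rw [h2, h3]
  refine h4.trans ?_
  -- now bound the rejection term, two cases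
  by_cases hqM : M ≤ V q
  · -- K q S ≤ ofReal ε
    have hbdd : BddAbove (Set.range (fun q' : EuclideanSpace ℝ (Fin d) =>
        ⨆ _ : q' ∈ {q' : EuclideanSpace ℝ (Fin d) | M ≤ V q'},
          (K q' ({z | α q' z < 1} ∩ {z | V z.1 ≤ V q'})).toReal)) := by
      refine ⟨1, fun x hx => ?_⟩
      obtain ⟨q', rfl⟩ := hx
      dsimp only
      by_cases h : q' ∈ {q' : EuclideanSpace ℝ (Fin d) | M ≤ V q'}
      · rw [ciSup_pos h]
        have h1 : K q' ({z | α q' z < 1} ∩ {z | V z.1 ≤ V q'}) ≤ 1 := prob_le_one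
        have h2 := ENNReal.toReal_mono ENNReal.one_ne_top h1
        simpa using h2
      · haveI : IsEmpty (q' ∈ {q' : EuclideanSpace ℝ (Fin d) | M ≤ V q'}) := ⟨fun hp => h hp⟩
        rw [iSup_of_empty', Real.sSup_empty]
        exact zero_le_one
    have hle : (K q S).toReal ≤ ⨆ q' ∈ {q' : EuclideanSpace ℝ (Fin d) | M ≤ V q'},
        (K q' ({z | α q' z < 1} ∩ {z | V z.1 ≤ V q'})).toReal := by
      have := le_ciSup hbdd q
      rwa [ciSup_pos (show q ∈ {q' : EuclideanSpace ℝ (Fin d) | M ≤ V q'} from hqM)] at this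
    have hKS : K q S ≤ ENNReal.ofReal ε := by
      rw [← ENNReal.ofReal_toReal (measure_ne_top (K q) S)]
      exact ENNReal.ofReal_le_ofReal (hle.trans hM0'.le)
    calc ENNReal.ofReal (lam * V q + b) + ENNReal.ofReal (V q) * K q S
        ≤ ENNReal.ofReal (lam * V q + b) + ENNReal.ofReal (V q) * ENNReal.ofReal ε :=
          add_le_add_right (mul_le_mul_of_nonneg_left hKS (zero_le)) _
      _ = ENNReal.ofReal (lam * V q + b + V q * ε) := by
          rw [← ENNReal.ofReal_mul hVq0, ← ENNReal.ofReal_add (by nlinarith) (by nlinarith)]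
      _ ≤ ENNReal.ofReal ((lam + ε) * V q + (b + M)) :=
          ENNReal.ofReal_le_ofReal (by nlinarith)
  · push_neg at hqM
    have hKS : K q S ≤ 1 := prob_le_one
    calc ENNReal.ofReal (lam * V q + b) + ENNReal.ofReal (V q) * K q S
        ≤ ENNReal.ofReal (lam * V q + b) + ENNReal.ofReal (V q) * 1 :=
          add_le_add_right (mul_le_mul_of_nonneg_left hKS (zero_le)) _
      _ = ENNReal.ofReal (lam * V q + b + V q) := by
          rw [mul_one, ← ENNReal.ofReal_add (by nlinarith) hVq0]
      _ ≤ ENNReal.ofReal ((lam + ε) * V q + (b + M)) :=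
          ENNReal.ofReal_le_ofReal (by nlinarith)
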